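/- Let f be a non-negative m-monotone submodular set function on a finite ground set 𝒩, and let k be an integer with 1 ≤ k ≤ |𝒩|. Consider any run of the greedy algorithm: A₀ = ∅, and for i = 1, …, k, let uᵢ be an element of 𝒩 ∖ A_{i−1} maximizing f(A_{i−1} ∪ {u}) − f(A_{i−1}) over u ∈ 𝒩 ∖ A_{i−1}; if f(A_{i−1} ∪ {uᵢ}) − f(A_{i−1}) ≥ 0 then Aᵢ = A_{i−1} ∪ {uᵢ}, and otherwise Aᵢ = A_{i−1}. Then for every set O ⊆ 𝒩 with |O| ≤ k, f(A_k) ≥ m·(1 − 1/e)·f(O). -/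

import Mathlib

/-- A set function on a finite ground set is submodular if the marginal contribution of an
element can only decrease when the set grows. -/
def Submodular {α : Type*} [Fintype α] [DecidableEq α] (f : Finset α → ℝ) : Prop :=
  ∀ S T : Finset α, S ⊆ T → ∀ u, u ∉ T →
    f (insert u T) - f T ≤ f (insert u S) - f S

/-- A set function is `m`-monotone if `m · f(S) ≤ f(T)` whenever `S ⊆ T`. -/
def MMonotone {α : Type*} [Fintype α] [DecidableEq α] (m : ℝ) (f : Finset α → ℝ) : Prop :=
  ∀ S T : Finset α, S ⊆ T → m * f S ≤ f T

lemma sub_sum {α : Type*} [Fintype α] [DecidableEq α] {f : Finset α → ℝ}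
    (hsub : Submodular f) :
    ∀ (T S : Finset α), f (S ∪ T) - f S ≤ ∑ v ∈ T \ S, (f (insert v S) - f S) := by
  intro T
  induction T using Finset.induction_on with
  | empty => intro S; simp
  | @insert a T ha ih =>
    intro S
    by_cases haS : a ∈ S
    · have h1 : S ∪ insert a T = S ∪ T := by
        rw [Finset.union_insert, Finset.insert_eq_self.mpr (Finset.mem_union_left _ haS)]
      have h2 : insert a T \ S = T \ S := by
        rw [Finset.insert_sdiff_of_mem _ haS]
      rw [h1, h2]; exact ih S
    · have h2 : insert a T \ S = insert a (T \ S) := by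
        rw [Finset.insert_sdiff_of_notMem _ haS]
      have haTS : a ∉ T \ S := fun h => ha (Finset.mem_sdiff.mp h).1
      rw [h2, Finset.sum_insert haTS, Finset.union_insert]
      have haST : a ∉ S ∪ T := by simp [haS, ha]
      have key := hsub S (S ∪ T) Finset.subset_union_left a haST
      have := ih S
      linarith

/-- the greedy algorithm for a cardinality constraint `k` applied to a
non-negative `m`-monotone submodular function returns a set `A_k` with
`f(A_k) ≥ m·(1 − 1/e)·f(O)` for every `O` with `|O| ≤ k`. At each step `i < k`,
`u i` is an element of `𝒩 ∖ A_i` maximizing the marginal contribution to `A_i`, and it is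
added to the solution exactly when this marginal contribution is non-negative. -/
theorem stmt6 {α : Type*} [Fintype α] [DecidableEq α]
    (m : ℝ) (hm : m ∈ Set.Icc (0 : ℝ) 1)
    (f : Finset α → ℝ)
    (hnn : ∀ S : Finset α, 0 ≤ f S)
    (hsub : Submodular f)
    (hmon : MMonotone m f)
    (k : ℕ) (hk1 : 1 ≤ k) (hk2 : k ≤ Fintype.card α)
    (A : ℕ → Finset α) (u : ℕ → α)
    (hA0 : A 0 = ∅)
    (hstep : ∀ i < k, u i ∉ A i ∧
      (∀ v, v ∉ A i → f (insert v (A i)) - f (A i) ≤ f (insert (u i) (A i)) - f (A i)) ∧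
      A (i + 1) =
        if 0 ≤ f (insert (u i) (A i)) - f (A i) then insert (u i) (A i) else A i)
    (O : Finset α) (hO : O.card ≤ k) :
    m * (1 - 1 / Real.exp 1) * f O ≤ f (A k) := by
  obtain ⟨hm0, hm1⟩ := hm
  have hK1 : (1 : ℝ) ≤ (k : ℝ) := by exact_mod_cast hk1
  have hK0 : (0 : ℝ) < (k : ℝ) := by linarith
  set c : ℝ := 1 - 1 / (k : ℝ) with hc
  have hc0 : 0 ≤ c := by
    have : 1 / (k : ℝ) ≤ 1 := by
      rw [div_le_one hK0]; exact hK1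
    simp only [hc]; linarith
  have hmfO : 0 ≤ m * f O := mul_nonneg hm0 (hnn O)
  -- per-step gain bound
  have hstep' : ∀ i < k, m * f O - f (A i) ≤ (k : ℝ) * (f (A (i + 1)) - f (A i)) := by
    intro i hi
    obtain ⟨hu, hmax, hAi⟩ := hstep i hi
    set g := f (insert (u i) (A i)) - f (A i) with hg'
    have hsum := sub_sum hsub O (A i)
    have hmono : m * f O ≤ f (A i ∪ O) := hmon O (A i ∪ O) Finset.subset_union_right
    have hcard : ((O \ A i).card : ℝ) ≤ (k : ℝ) := by
      have : (O \ A i).card ≤ O.card := Finset.card_le_card (Finset.sdiff_subset)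
      exact_mod_cast le_trans this hO
    by_cases hg : 0 ≤ g
    · have hA1 : A (i + 1) = insert (u i) (A i) := by rw [hAi, if_pos hg]
      have hA1' : f (A (i + 1)) - f (A i) = g := by rw [hA1]
      have hterm : ∀ v ∈ O \ A i, f (insert v (A i)) - f (A i) ≤ g := by
        intro v hv; exact hmax v (Finset.mem_sdiff.mp hv).2
      have hs : ∑ v ∈ O \ A i, (f (insert v (A i)) - f (A i)) ≤ ((O \ A i).card : ℝ) * g := by
        calc ∑ v ∈ O \ A i, (f (insert v (A i)) - f (A i))
            ≤ ∑ _v ∈ O \ A i, g := Finset.sum_le_sum hterm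
          _ = ((O \ A i).card : ℝ) * g := by rw [Finset.sum_const, nsmul_eq_mul]
      have hkg : ((O \ A i).card : ℝ) * g ≤ (k : ℝ) * g :=
        mul_le_mul_of_nonneg_right hcard hg
      rw [hA1']
      linarith
    · have hA1 : A (i + 1) = A i := by rw [hAi, if_neg hg]
      have hterm : ∀ v ∈ O \ A i, f (insert v (A i)) - f (A i) ≤ 0 := by
        intro v hv
        have := hmax v (Finset.mem_sdiff.mp hv).2
        push_neg at hg
        linarith
      have hs : ∑ v ∈ O \ A i, (f (insert v (A i)) - f (A i)) ≤ 0 :=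
        Finset.sum_nonpos hterm
      rw [hA1]
      simp only [sub_self, mul_zero]
      linarith
  -- induction
  have hind : ∀ i ≤ k, m * f O * (1 - c ^ i) ≤ f (A i) := by
    intro i
    induction i with
    | zero => intro _; simpa using hnn (A 0)
    | succ i ih =>
      intro hik
      have hik' : i < k := hik
      have h1 := ih (le_of_lt hik')
      have h2 := hstep' i hik'
      have hci : 0 ≤ c ^ i := pow_nonneg hc0 i
      have hKc : (k : ℝ) * c = (k : ℝ) - 1 := by
        rw [hc, mul_sub, mul_one, mul_one_div_cancel hK0.ne']
      have hK1' : (0 : ℝ) ≤ (k : ℝ) - 1 := by linarith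
      have e1 : (k : ℝ) * (m * f O * (1 - c ^ (i + 1)))
          = ((k : ℝ) - 1) * (m * f O * (1 - c ^ i)) + m * f O := by
        rw [pow_succ]
        linear_combination (-(m * f O * c ^ i)) * hKc
      have e2 : ((k : ℝ) - 1) * (m * f O * (1 - c ^ i)) ≤ ((k : ℝ) - 1) * f (A i) :=
        mul_le_mul_of_nonneg_left h1 hK1'
      have e3 : (k : ℝ) * (m * f O * (1 - c ^ (i + 1))) ≤ (k : ℝ) * f (A (i + 1)) := by
        rw [e1]; nlinarith
      exact le_of_mul_le_mul_left e3 hK0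
  have hfin := hind k le_rfl
  -- (1 - 1/k)^k ≤ 1/e
  have hce : c ≤ Real.exp (-(1 / (k : ℝ))) := by
    have := Real.add_one_le_exp (-(1 / (k : ℝ)))
    simp only [hc]; linarith
  have hck : c ^ k ≤ 1 / Real.exp 1 := by
    calc c ^ k ≤ Real.exp (-(1 / (k : ℝ))) ^ k := pow_le_pow_left₀ hc0 hce k
      _ = Real.exp ((k : ℝ) * (-(1 / (k : ℝ)))) := (Real.exp_nat_mul _ k).symm
      _ = Real.exp (-1) := by
          congr 1
          field_simp
      _ = 1 / Real.exp 1 := by rw [Real.exp_neg]; ring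
  have : m * f O * (1 - 1 / Real.exp 1) ≤ m * f O * (1 - c ^ k) :=
    mul_le_mul_of_nonneg_left (by linarith) hmfO
  calc m * (1 - 1 / Real.exp 1) * f O = m * f O * (1 - 1 / Real.exp 1) := by ring
    _ ≤ m * f O * (1 - c ^ k) := this
    _ ≤ f (A k) := hfin
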